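/- Let m, λ be real constants with m ≠ 0 and let A : ℝ → ℝ be differentiable with A(t) ≠ 0 for all t. On ℝ⁴ with coordinates (t,x,y,z), define the Bianchi III metric g = diag(−A(t)²e^{mλt}, A(t)²e^{mλt}, A(t)²e^{m(λ−1)t}, A(t)²e^{−2x}). Then the vector field X₃ = (2/m, 0, y, λz) is a conformal Killing vector of g with conformal factor ψ(t,x,y,z) = (2/m)·A′(t)/A(t) + λ: for all μ,ν and all points p, Σ_λ' [ξ^{λ'}(p)·∂_{λ'} g_{μν}(p) + g_{λ'ν}(p)·∂_μ ξ^{λ'}(p) + g_{μλ'}(p)·∂_ν ξ^{λ'}(p)] = 2ψ(p)·g_{μν}(p). -/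

import Mathlib

noncomputable section

/-- Partial derivative of `f` in the `μ`-th coordinate direction at `p`. -/
def pd (μ : Fin 4) (f : (Fin 4 → ℝ) → ℝ) (p : Fin 4 → ℝ) : ℝ :=
  fderiv ℝ f p (Pi.single μ 1)

lemma hproj (i : Fin 4) (p : Fin 4 → ℝ) :
    HasFDerivAt (fun q : Fin 4 → ℝ => q i)
      (ContinuousLinearMap.proj (R := ℝ) (φ := fun _ : Fin 4 => ℝ) i) p :=
  (ContinuousLinearMap.proj (R := ℝ) (φ := fun _ : Fin 4 => ℝ) i).hasFDerivAt

lemma pd_mul_apply (F G : ℝ → ℝ) (i j μ : Fin 4) (p : Fin 4 → ℝ)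
    (hF : DifferentiableAt ℝ F (p i)) (hG : DifferentiableAt ℝ G (p j)) :
    pd μ (fun q => F (q i) * G (q j)) p =
      (if i = μ then deriv F (p i) else 0) * G (p j)
        + F (p i) * (if j = μ then deriv G (p j) else 0) := by
  have hFi : HasFDerivAt (fun q : Fin 4 → ℝ => F (q i))
      ((deriv F (p i)) • ContinuousLinearMap.proj (R := ℝ) (φ := fun _ : Fin 4 => ℝ) i) p :=
    hF.hasDerivAt.comp_hasFDerivAt p (hproj i p)
  have hGj : HasFDerivAt (fun q : Fin 4 → ℝ => G (q j))
      ((deriv G (p j)) • ContinuousLinearMap.proj (R := ℝ) (φ := fun _ : Fin 4 => ℝ) j) p :=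
    hG.hasDerivAt.comp_hasFDerivAt p (hproj j p)
  rw [pd, (hFi.fun_mul hGj).fderiv]
  simp [Pi.single_apply]
  by_cases h1 : i = μ <;> by_cases h2 : j = μ <;> simp [h1, h2] <;> ring

lemma pd_const (μ : Fin 4) (c : ℝ) (p : Fin 4 → ℝ) : pd μ (fun _ => c) p = 0 := by
  simp [pd]

lemma pd_coord (μ i : Fin 4) (p : Fin 4 → ℝ) :
    pd μ (fun q => q i) p = if i = μ then 1 else 0 := by
  rw [pd, (hproj i p).fderiv]
  simp [Pi.single_apply]

lemma pd_smul_coord (μ i : Fin 4) (c : ℝ) (p : Fin 4 → ℝ) :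
    pd μ (fun q => c * q i) p = if i = μ then c else 0 := by
  have h : HasFDerivAt (fun q : Fin 4 → ℝ => c * q i)
      (c • ContinuousLinearMap.proj (R := ℝ) (φ := fun _ : Fin 4 => ℝ) i) p :=
    (hproj i p).const_smul c
  rw [pd, h.fderiv]
  simp [Pi.single_apply]

lemma pd_neg (μ : Fin 4) (f : (Fin 4 → ℝ) → ℝ) (p : Fin 4 → ℝ) :
    pd μ (fun q => -(f q)) p = -(pd μ f p) := by
  simp [pd, fderiv_neg]

/-- `ξ` is a conformal Killing vector of the metric `g` with conformal factor `ψ`. -/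
def IsCKV (g : (Fin 4 → ℝ) → Matrix (Fin 4) (Fin 4) ℝ)
    (ξ : (Fin 4 → ℝ) → Fin 4 → ℝ) (ψ : (Fin 4 → ℝ) → ℝ) : Prop :=
  ∀ (μ ν : Fin 4) (p : Fin 4 → ℝ),
    (∑ l : Fin 4, (ξ p l * pd l (fun q => g q μ ν) p
      + g p l ν * pd μ (fun q => ξ q l) p
      + g p μ l * pd ν (fun q => ξ q l) p)) = 2 * ψ p * g p μ ν

/-- `ξ` is a Killing vector of the metric `g`. -/
def IsKV (g : (Fin 4 → ℝ) → Matrix (Fin 4) (Fin 4) ℝ)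
    (ξ : (Fin 4 → ℝ) → Fin 4 → ℝ) : Prop :=
  ∀ (μ ν : Fin 4) (p : Fin 4 → ℝ),
    (∑ l : Fin 4, (ξ p l * pd l (fun q => g q μ ν) p
      + g p l ν * pd μ (fun q => ξ q l) p
      + g p μ l * pd ν (fun q => ξ q l) p)) = 0

/-- the vector field `X₃ = (2/m)∂_t + y∂_y + λz∂_z` is a conformal Killing
vector of the Bianchi III metric `diag(−A²e^{mλt}, A²e^{mλt}, A²e^{m(λ−1)t}, A²e^{−2x})`
with conformal factor `ψ = (2/m) A′(t)/A(t) + λ`. -/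
theorem bianchiIII_X3_is_CKV (m lam : ℝ) (hm : m ≠ 0)
    (A : ℝ → ℝ) (hA : Differentiable ℝ A) (hA0 : ∀ t, A t ≠ 0)
    (g : (Fin 4 → ℝ) → Matrix (Fin 4) (Fin 4) ℝ)
    (hg : g = fun p => Matrix.diagonal
      ![-((A (p 0)) ^ 2 * Real.exp (m * lam * p 0)),
        (A (p 0)) ^ 2 * Real.exp (m * lam * p 0),
        (A (p 0)) ^ 2 * Real.exp (m * (lam - 1) * p 0),
        (A (p 0)) ^ 2 * Real.exp (-2 * p 1)])
    (ξ : (Fin 4 → ℝ) → Fin 4 → ℝ)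
    (hξ : ξ = fun p => ![2 / m, 0, p 2, lam * p 3])
    (ψ : (Fin 4 → ℝ) → ℝ)
    (hψ : ψ = fun p => (2 / m) * deriv A (p 0) / A (p 0) + lam) :
    IsCKV g ξ ψ := by
  subst hg hξ hψ
  have hA2 : ∀ s, HasDerivAt (fun t => A t ^ 2) (2 * A s * deriv A s) s := by
    intro s
    simpa [mul_comm, mul_assoc] using ((hA s).hasDerivAt.fun_pow 2)
  have hexp : ∀ (c s : ℝ), HasDerivAt (fun t => Real.exp (c * t)) (c * Real.exp (c * s)) s := by
    intro c s
    simpa [mul_comm] using ((hasDerivAt_id s).const_mul c).exp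
  have hdA2 : ∀ s, deriv (fun t => A t ^ 2) s = 2 * A s * deriv A s := fun s => (hA2 s).deriv
  have hdexp : ∀ c s, deriv (fun t => Real.exp (c * t)) s = c * Real.exp (c * s) :=
    fun c s => (hexp c s).deriv
  have e1 : ∀ (μ : Fin 4) (p : Fin 4 → ℝ),
      pd μ (fun q => A (q 0) ^ 2 * Real.exp (m * lam * q 0)) p =
        if (0 : Fin 4) = μ then
          2 * A (p 0) * deriv A (p 0) * Real.exp (m * lam * p 0)
            + A (p 0) ^ 2 * (m * lam * Real.exp (m * lam * p 0)) else 0 := by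
    intro μ p
    rw [pd_mul_apply (fun t => A t ^ 2) (fun t => Real.exp (m * lam * t)) 0 0 μ p
      ((hA (p 0)).pow 2) ((hexp (m * lam) (p 0)).differentiableAt)]
    rw [hdA2, hdexp]
    split_ifs <;> ring
  have e0 : ∀ (μ : Fin 4) (p : Fin 4 → ℝ),
      pd μ (fun q => -(A (q 0) ^ 2 * Real.exp (m * lam * q 0))) p =
        -(if (0 : Fin 4) = μ then
          2 * A (p 0) * deriv A (p 0) * Real.exp (m * lam * p 0)
            + A (p 0) ^ 2 * (m * lam * Real.exp (m * lam * p 0)) else 0) := by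
    intro μ p
    rw [pd_neg μ (fun q => A (q 0) ^ 2 * Real.exp (m * lam * q 0)) p, e1]
  have e2 : ∀ (μ : Fin 4) (p : Fin 4 → ℝ),
      pd μ (fun q => A (q 0) ^ 2 * Real.exp (m * (lam - 1) * q 0)) p =
        if (0 : Fin 4) = μ then
          2 * A (p 0) * deriv A (p 0) * Real.exp (m * (lam - 1) * p 0)
            + A (p 0) ^ 2 * (m * (lam - 1) * Real.exp (m * (lam - 1) * p 0)) else 0 := by
    intro μ p
    rw [pd_mul_apply (fun t => A t ^ 2) (fun t => Real.exp (m * (lam - 1) * t)) 0 0 μ p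
      ((hA (p 0)).pow 2) ((hexp (m * (lam - 1)) (p 0)).differentiableAt)]
    rw [hdA2, hdexp]
    split_ifs <;> ring
  have hexpn : ∀ s : ℝ, HasDerivAt (fun t => Real.exp (-(2 * t))) (-2 * Real.exp (-(2 * s))) s := by
    intro s
    simpa [neg_mul] using hexp (-2) s
  have e3 : ∀ (μ : Fin 4) (p : Fin 4 → ℝ),
      pd μ (fun q => A (q 0) ^ 2 * Real.exp (-(2 * q 1))) p =
        (if (0 : Fin 4) = μ then 2 * A (p 0) * deriv A (p 0) else 0) * Real.exp (-(2 * p 1))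
          + A (p 0) ^ 2 * (if (1 : Fin 4) = μ then -2 * Real.exp (-(2 * p 1)) else 0) := by
    intro μ p
    rw [pd_mul_apply (fun t => A t ^ 2) (fun t => Real.exp (-(2 * t))) 0 1 μ p
      ((hA (p 0)).pow 2) ((hexpn (p 1)).differentiableAt)]
    rw [hdA2, (hexpn (p 1)).deriv]
  intro μ ν p
  fin_cases μ <;> fin_cases ν <;>
    simp [Fin.sum_univ_four, Matrix.diagonal_apply, e0, e1, e2, e3,
      pd_const, pd_coord, pd_smul_coord] <;>
    field_simp [hA0 (p 0)] <;> try ring
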